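/- arXiv:2011.02609 — 10 statements merged into one kernel-verified Lean document; each statement's English description precedes it below -/
import Mathlib

section
/- (Theorem 1.) Let B and S be disjoint nonempty finite index sets of buying and selling prosumers, with parameters a_{i,b} > 0, b_{i,b} ∈ ℝ, P̲_{i,b} < 0 for buyers and a_{i,s} > 0, b_{i,s} ∈ ℝ, P̄_{i,s} > 0 for sellers, and let λ̲ ≤ λ̄. Suppose: (i) λ̲ ≤ b̲_s ≤ b̄_s < b̲_b ≤ b̄_b ≤ λ̄; (ii) a_{i,b} > (b̄_b − b̄_s)/(−2 P̲_{i,b}) for every buyer i ∈ B; (iii) a_{i,s} > (b̲_b − b̲_s)/(2 P̄_{i,s}) for every seller i ∈ S; and (iv) (Σ_{i∈S} (1/a_{i,s}))·(b̄_s − b̲_s) < (Σ_{i∈B} (1/a_{i,b}))·(b̲_b − b̄_s) and (Σ_{i∈B} (1/a_{i,b}))·(b̄_b − b̲_b) < (Σ_{i∈S} (1/a_{i,s}))·(b̲_b − b̄_s). Then strict feasibility holds: P̲_{i,b} < P*_{i,b} < 0 for every i ∈ B and 0 < P*_{i,s} < P̄_{i,s} for every i ∈ S. -/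
/-- Theorem 1: sufficient interval conditions on the cost-function parameters of
buying and selling prosumers that guarantee strict feasibility of all P2P
energy transactions. -/
theorem thm1_strict_feasibility {ι : Type*} (B S : Finset ι) (hBS : Disjoint B S)
    (hB : B.Nonempty) (hS : S.Nonempty)
    (ab bb Pb as bs Ps : ι → ℝ)
    (hab : ∀ i ∈ B, 0 < ab i) (hPb : ∀ i ∈ B, Pb i < 0)
    (has : ∀ i ∈ S, 0 < as i) (hPs : ∀ i ∈ S, 0 < Ps i)
    (lamL lamU : ℝ) (hlamLU : lamL ≤ lamU)
    (lam : ℝ)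
    (hlam : lam = (∑ i ∈ B, bb i / ab i + ∑ i ∈ S, bs i / as i) /
                  (∑ i ∈ B, 1 / ab i + ∑ i ∈ S, 1 / as i))
    (bbmin bbmax bsmin bsmax : ℝ)
    (hbbmin : bbmin = B.inf' hB bb) (hbbmax : bbmax = B.sup' hB bb)
    (hbsmin : bsmin = S.inf' hS bs) (hbsmax : bsmax = S.sup' hS bs)
    -- (i)
    (h1 : lamL ≤ bsmin) (h2 : bsmin ≤ bsmax) (h3 : bsmax < bbmin)
    (h4 : bbmin ≤ bbmax) (h5 : bbmax ≤ lamU)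
    -- (ii)
    (h6 : ∀ i ∈ B, ab i > (bbmax - bsmax) / (-2 * Pb i))
    -- (iii)
    (h7 : ∀ i ∈ S, as i > (bbmin - bsmin) / (2 * Ps i))
    -- (iv)
    (h8 : (∑ i ∈ S, 1 / as i) * (bsmax - bsmin) < (∑ i ∈ B, 1 / ab i) * (bbmin - bsmax))
    (h9 : (∑ i ∈ B, 1 / ab i) * (bbmax - bbmin) < (∑ i ∈ S, 1 / as i) * (bbmin - bsmax)) :
    (∀ i ∈ B, Pb i < (lam - bb i) / (2 * ab i) ∧ (lam - bb i) / (2 * ab i) < 0) ∧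
    (∀ i ∈ S, 0 < (lam - bs i) / (2 * as i) ∧ (lam - bs i) / (2 * as i) < Ps i) := by
  set A := ∑ i ∈ B, 1 / ab i with hA
  set C := ∑ i ∈ S, 1 / as i with hC
  have hApos : 0 < A := Finset.sum_pos (fun i hi => one_div_pos.mpr (hab i hi)) hB
  have hCpos : 0 < C := Finset.sum_pos (fun i hi => one_div_pos.mpr (has i hi)) hS
  -- bounds on numerator
  have hNlo : A * bbmin + C * bsmin ≤ ∑ i ∈ B, bb i / ab i + ∑ i ∈ S, bs i / as i := by
    have hb : A * bbmin ≤ ∑ i ∈ B, bb i / ab i := by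
      rw [hA, Finset.sum_mul]
      refine Finset.sum_le_sum fun i hi => ?_
      have h := hab i hi
      have hm : bbmin ≤ bb i := hbbmin ▸ Finset.inf'_le bb hi
      rw [one_div, div_eq_mul_inv, mul_comm (bb i)]
      exact mul_le_mul_of_nonneg_left hm (inv_nonneg.mpr h.le)
    have hs' : C * bsmin ≤ ∑ i ∈ S, bs i / as i := by
      rw [hC, Finset.sum_mul]
      refine Finset.sum_le_sum fun i hi => ?_
      have h := has i hi
      have hm : bsmin ≤ bs i := hbsmin ▸ Finset.inf'_le bs hi
      rw [one_div, div_eq_mul_inv, mul_comm (bs i)]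
      exact mul_le_mul_of_nonneg_left hm (inv_nonneg.mpr h.le)
    linarith
  have hNhi : ∑ i ∈ B, bb i / ab i + ∑ i ∈ S, bs i / as i ≤ A * bbmax + C * bsmax := by
    have hb : ∑ i ∈ B, bb i / ab i ≤ A * bbmax := by
      rw [hA, Finset.sum_mul]
      refine Finset.sum_le_sum fun i hi => ?_
      have h := hab i hi
      have hm : bb i ≤ bbmax := hbbmax ▸ Finset.le_sup' bb hi
      rw [one_div, div_eq_mul_inv, mul_comm (bb i)]
      exact mul_le_mul_of_nonneg_left hm (inv_nonneg.mpr h.le)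
    have hs' : ∑ i ∈ S, bs i / as i ≤ C * bsmax := by
      rw [hC, Finset.sum_mul]
      refine Finset.sum_le_sum fun i hi => ?_
      have h := has i hi
      have hm : bs i ≤ bsmax := hbsmax ▸ Finset.le_sup' bs hi
      rw [one_div, div_eq_mul_inv, mul_comm (bs i)]
      exact mul_le_mul_of_nonneg_left hm (inv_nonneg.mpr h.le)
    linarith
  have hden : 0 < A + C := by linarith
  have hlam_lo : bsmax < lam := by
    rw [hlam, lt_div_iff₀ hden]
    nlinarith
  have hlam_hi : lam < bbmin := by
    rw [hlam, div_lt_iff₀ hden]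
    nlinarith
  constructor
  · intro i hi
    have ha := hab i hi
    have hp := hPb i hi
    have hbi_le : bb i ≤ bbmax := hbbmax ▸ Finset.le_sup' bb hi
    have hbi_ge : bbmin ≤ bb i := hbbmin ▸ Finset.inf'_le bb hi
    have h6i := h6 i hi
    have hkey : bbmax - bsmax < ab i * (-2 * Pb i) := by
      rw [gt_iff_lt, div_lt_iff₀ (by linarith : (0:ℝ) < -2 * Pb i)] at h6i
      linarith
    constructor
    · rw [lt_div_iff₀ (by positivity : (0:ℝ) < 2 * ab i)]
      nlinarith
    · apply div_neg_of_neg_of_pos (by linarith) (by positivity)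
  · intro i hi
    have ha := has i hi
    have hp := hPs i hi
    have hbi_le : bs i ≤ bsmax := hbsmax ▸ Finset.le_sup' bs hi
    have hbi_ge : bsmin ≤ bs i := hbsmin ▸ Finset.inf'_le bs hi
    have h7i := h7 i hi
    have hkey : bbmin - bsmin < as i * (2 * Ps i) := by
      rw [gt_iff_lt, div_lt_iff₀ (by linarith : (0:ℝ) < 2 * Ps i)] at h7i
      linarith
    constructor
    · apply div_pos (by linarith) (by positivity)
    · rw [div_lt_iff₀ (by positivity : (0:ℝ) < 2 * as i)]
      nlinarith
end

section
/- Let B and S be disjoint nonempty finite index sets of buying and selling prosumers with parameters a_{i,b} > 0, b_{i,b} ∈ ℝ (buyers) and a_{i,s} > 0, b_{i,s} ∈ ℝ (sellers). If (Σ_{i∈B} (1/a_{i,b}))·(b̄_b − b̲_b) < (Σ_{i∈S} (1/a_{i,s}))·(b̲_b − b̄_s), then the market-clearing price satisfies λ* < b_{i,b} for every buyer i ∈ B, i.e., every buyer's optimal trading power P*_{i,b} = (λ* − b_{i,b})/(2a_{i,b}) is strictly negative (every buyer trades successfully). -/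
/-- If `(∑_B 1/a_b)·(b̄_b − b̲_b) < (∑_S 1/a_s)·(b̲_b − b̄_s)`, then every buyer
trades successfully: `λ* < b_{i,b}` for every buyer `i`. -/
theorem buyers_trade_successfully {ι : Type*} (B S : Finset ι) (hBS : Disjoint B S)
    (hB : B.Nonempty) (hS : S.Nonempty)
    (ab bb as bs : ι → ℝ)
    (hab : ∀ i ∈ B, 0 < ab i) (has : ∀ i ∈ S, 0 < as i)
    (lam : ℝ)
    (hlam : lam = (∑ i ∈ B, bb i / ab i + ∑ i ∈ S, bs i / as i) /
                  (∑ i ∈ B, 1 / ab i + ∑ i ∈ S, 1 / as i))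
    (bbmin bbmax bsmax : ℝ)
    (hbbmin : bbmin = B.inf' hB bb) (hbbmax : bbmax = B.sup' hB bb)
    (hbsmax : bsmax = S.sup' hS bs)
    (h : (∑ i ∈ B, 1 / ab i) * (bbmax - bbmin) < (∑ i ∈ S, 1 / as i) * (bbmin - bsmax)) :
    ∀ i ∈ B, lam < bb i ∧ (lam - bb i) / (2 * ab i) < 0 := by
  intro i hi
  have hSB : 0 < ∑ j ∈ B, 1 / ab j :=
    Finset.sum_pos (fun j hj => by have := hab j hj; positivity) hB
  have hSS : 0 < ∑ j ∈ S, 1 / as j :=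
    Finset.sum_pos (fun j hj => by have := has j hj; positivity) hS
  have h1 : ∑ j ∈ B, bb j / ab j ≤ bbmax * ∑ j ∈ B, 1 / ab j := by
    rw [Finset.mul_sum]
    refine Finset.sum_le_sum fun j hj => ?_
    have haj := hab j hj
    have hle : bb j ≤ bbmax := hbbmax ▸ Finset.le_sup' bb hj
    rw [div_eq_mul_inv, mul_one_div, div_eq_mul_inv]
    exact mul_le_mul_of_nonneg_right hle (by positivity)
  have h2 : ∑ j ∈ S, bs j / as j ≤ bsmax * ∑ j ∈ S, 1 / as j := by
    rw [Finset.mul_sum]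
    refine Finset.sum_le_sum fun j hj => ?_
    have haj := has j hj
    have hle : bs j ≤ bsmax := hbsmax ▸ Finset.le_sup' bs hj
    rw [div_eq_mul_inv, mul_one_div, div_eq_mul_inv]
    exact mul_le_mul_of_nonneg_right hle (by positivity)
  have hlt : lam < bbmin := by
    rw [hlam, div_lt_iff₀ (by linarith)]
    nlinarith
  have hmin : bbmin ≤ bb i := hbbmin ▸ Finset.inf'_le bb hi
  have hlb : lam < bb i := lt_of_lt_of_le hlt hmin
  exact ⟨hlb, div_neg_of_neg_of_pos (by linarith) (by linarith [hab i hi])⟩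
end

section
/- Let B and S be disjoint nonempty finite index sets of buying and selling prosumers with parameters a_{i,b} > 0, b_{i,b} ∈ ℝ (buyers) and a_{i,s} > 0, b_{i,s} ∈ ℝ (sellers). If (Σ_{i∈B} (1/a_{i,b}))·(b̲_b − b̄_s) > (Σ_{i∈S} (1/a_{i,s}))·(b̄_s − b̲_s), then the market-clearing price satisfies λ* > b_{i,s} for every seller i ∈ S, i.e., every seller's optimal trading power P*_{i,s} = (λ* − b_{i,s})/(2a_{i,s}) is strictly positive (every seller trades successfully). -/
/-- If `(∑_B 1/a_b)·(b̲_b − b̄_s) > (∑_S 1/a_s)·(b̄_s − b̲_s)`, then every seller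
trades successfully: `λ* > b_{i,s}` for every seller `i`. -/
theorem sellers_trade_successfully {ι : Type*} (B S : Finset ι) (hBS : Disjoint B S)
    (hB : B.Nonempty) (hS : S.Nonempty)
    (ab bb as bs : ι → ℝ)
    (hab : ∀ i ∈ B, 0 < ab i) (has : ∀ i ∈ S, 0 < as i)
    (lam : ℝ)
    (hlam : lam = (∑ i ∈ B, bb i / ab i + ∑ i ∈ S, bs i / as i) /
                  (∑ i ∈ B, 1 / ab i + ∑ i ∈ S, 1 / as i))
    (bbmin bsmin bsmax : ℝ)
    (hbbmin : bbmin = B.inf' hB bb)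
    (hbsmin : bsmin = S.inf' hS bs) (hbsmax : bsmax = S.sup' hS bs)
    (h : (∑ i ∈ B, 1 / ab i) * (bbmin - bsmax) > (∑ i ∈ S, 1 / as i) * (bsmax - bsmin)) :
    ∀ i ∈ S, lam > bs i ∧ 0 < (lam - bs i) / (2 * as i) := by
  have hSB : 0 < ∑ i ∈ B, 1 / ab i :=
    Finset.sum_pos (fun j hj => by have := hab j hj; positivity) hB
  have hSS : 0 < ∑ i ∈ S, 1 / as i :=
    Finset.sum_pos (fun j hj => by have := has j hj; positivity) hS
  have h1 : (∑ i ∈ B, 1 / ab i) * bbmin ≤ ∑ i ∈ B, bb i / ab i := by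
    rw [Finset.sum_mul]
    apply Finset.sum_le_sum
    intro j hj
    have hpos := hab j hj
    have hb : bbmin ≤ bb j := hbbmin ▸ Finset.inf'_le _ hj
    rw [one_div, inv_mul_eq_div]
    gcongr
  have h2 : (∑ i ∈ S, 1 / as i) * bsmin ≤ ∑ i ∈ S, bs i / as i := by
    rw [Finset.sum_mul]
    apply Finset.sum_le_sum
    intro j hj
    have hpos := has j hj
    have hb : bsmin ≤ bs j := hbsmin ▸ Finset.inf'_le _ hj
    rw [one_div, inv_mul_eq_div]
    gcongr
  have hlmax : bsmax < lam := by
    rw [hlam, lt_div_iff₀ (by linarith)]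
    nlinarith
  intro i hi
  have hle : bs i ≤ bsmax := hbsmax ▸ Finset.le_sup' _ hi
  have hlt : bs i < lam := lt_of_le_of_lt hle hlmax
  refine ⟨hlt, ?_⟩
  have ha := has i hi
  have h3 : 0 < lam - bs i := by linarith
  positivity
end

section
/- Let b̄_b, b̄_s, λ ∈ ℝ with λ ≥ b̄_s, let i be a buyer with parameter a_{i,b} > 0, linear parameter b_{i,b} ≤ b̄_b, and power lower bound P̲_{i,b} < 0. If a_{i,b} > (b̄_b − b̄_s)/(−2 P̲_{i,b}), then (b_{i,b} − λ)/(2 a_{i,b}) < −P̲_{i,b}. In particular, if λ = λ* is the market-clearing price and λ* ≥ b̄_s, then the buyer's optimal trading power P*_{i,b} = (λ* − b_{i,b})/(2a_{i,b}) satisfies P*_{i,b} > P̲_{i,b}, i.e., the buyer does not exceed its desired maximum buying amount. -/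
/-- A buyer with `a_{i,b} > (b̄_b − b̄_s)/(−2 P̲_{i,b})` does not exceed its desired
maximum buying amount: `(b_{i,b} − λ)/(2 a_{i,b}) < −P̲_{i,b}` (equivalently,
`(λ − b_{i,b})/(2 a_{i,b}) > P̲_{i,b}`) whenever `λ ≥ b̄_s`. -/
theorem buyer_within_bound (bbmax bsmax lam : ℝ) (hlam : lam ≥ bsmax)
    (aib bib Pib : ℝ) (haib : 0 < aib) (hbib : bib ≤ bbmax) (hPib : Pib < 0)
    (ha : aib > (bbmax - bsmax) / (-2 * Pib)) :
    (bib - lam) / (2 * aib) < -Pib ∧ Pib < (lam - bib) / (2 * aib) := by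
  have h2P : 0 < -2 * Pib := by linarith
  have key : bbmax - bsmax < aib * (-2 * Pib) := by
    have := (div_lt_iff₀ h2P).mp ha
    linarith
  have h1 : (bib - lam) / (2 * aib) < -Pib := by
    rw [div_lt_iff₀ (by linarith : (0:ℝ) < 2 * aib)]
    nlinarith
  constructor
  · exact h1
  · have := h1
    rw [div_lt_iff₀ (by linarith : (0:ℝ) < 2 * aib)] at this
    rw [lt_div_iff₀ (by linarith : (0:ℝ) < 2 * aib)]
    linarith
end

section
/- Let b̲_b, b̲_s, λ ∈ ℝ with λ ≤ b̲_b, let i be a seller with parameter a_{i,s} > 0, linear parameter b_{i,s} ≥ b̲_s, and power upper bound P̄_{i,s} > 0. If a_{i,s} > (b̲_b − b̲_s)/(2 P̄_{i,s}), then (λ − b_{i,s})/(2 a_{i,s}) < P̄_{i,s}. In particular, if λ = λ* is the market-clearing price and λ* ≤ b̲_b, then the seller's optimal trading power P*_{i,s} = (λ* − b_{i,s})/(2a_{i,s}) satisfies P*_{i,s} < P̄_{i,s}, i.e., the seller does not exceed its desired maximum selling amount. -/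
/-- A seller with `a_{i,s} > (b̲_b − b̲_s)/(2 P̄_{i,s})` does not exceed its desired
maximum selling amount: `(λ − b_{i,s})/(2 a_{i,s}) < P̄_{i,s}` whenever `λ ≤ b̲_b`. -/
theorem seller_within_bound (bbmin bsmin lam : ℝ) (hlam : lam ≤ bbmin)
    (ais bis Pis : ℝ) (hais : 0 < ais) (hbis : bis ≥ bsmin) (hPis : 0 < Pis)
    (ha : ais > (bbmin - bsmin) / (2 * Pis)) :
    (lam - bis) / (2 * ais) < Pis := by
  rw [div_lt_iff₀ (by linarith)]
  rw [gt_iff_lt, div_lt_iff₀ (by linarith)] at ha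
  nlinarith
end

section
/- (Theorem 2.) Let B and S be disjoint nonempty finite index sets of buying and selling prosumers, with parameters a_{i,b} > 0, b_{i,b} ∈ ℝ, P̲_{i,b} < 0 for buyers and a_{i,s} > 0, b_{i,s} ∈ ℝ, P̄_{i,s} > 0 for sellers, and let λ̲ < λ̄. Let k > 3, 0 < k_s < 2, 0 < k_b < 2 satisfy 2/(k_b(k−2)) < (−Σ_{i∈B} P̲_{i,b})/(Σ_{i∈S} P̄_{i,s}) < k_s(k−2)/2. Suppose the prosumers choose their parameters so that for every seller i ∈ S: λ̲ ≤ b_{i,s} < λ̲ + (λ̄−λ̲)/k and (λ̄−λ̲)/(2 P̄_{i,s}) < a_{i,s} ≤ (λ̄−λ̲)/(k_s P̄_{i,s}); and for every buyer i ∈ B: λ̲ + (k−1)(λ̄−λ̲)/k < b_{i,b} ≤ λ̄ and (λ̄−λ̲)/(−2 P̲_{i,b}) < a_{i,b} ≤ (λ̄−λ̲)/(−k_b P̲_{i,b}). Then strict feasibility holds: P̲_{i,b} < P*_{i,b} < 0 for every i ∈ B and 0 < P*_{i,s} < P̄_{i,s} for every i ∈ S. -/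
set_option maxHeartbeats 1000000


/-- Theorem 2: decentralized, privacy-preserving parameter selection rules based on the
design parameters `k > 3`, `0 < k_s < 2`, `0 < k_b < 2` satisfying the global ratio
condition guarantee strict feasibility of all P2P energy transactions. -/
theorem thm2_strict_feasibility {ι : Type*} (B S : Finset ι) (hBS : Disjoint B S)
    (hB : B.Nonempty) (hS : S.Nonempty)
    (ab bb Pb as bs Ps : ι → ℝ)
    (hab : ∀ i ∈ B, 0 < ab i) (hPb : ∀ i ∈ B, Pb i < 0)
    (has : ∀ i ∈ S, 0 < as i) (hPs : ∀ i ∈ S, 0 < Ps i)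
    (lamL lamU : ℝ) (hlamLU : lamL < lamU)
    (lam : ℝ)
    (hlam : lam = (∑ i ∈ B, bb i / ab i + ∑ i ∈ S, bs i / as i) /
                  (∑ i ∈ B, 1 / ab i + ∑ i ∈ S, 1 / as i))
    (k ks kb : ℝ) (hk : k > 3) (hks : 0 < ks ∧ ks < 2) (hkb : 0 < kb ∧ kb < 2)
    (hratio1 : 2 / (kb * (k - 2)) < (-∑ i ∈ B, Pb i) / (∑ i ∈ S, Ps i))
    (hratio2 : (-∑ i ∈ B, Pb i) / (∑ i ∈ S, Ps i) < ks * (k - 2) / 2)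
    (hbs : ∀ i ∈ S, lamL ≤ bs i ∧ bs i < lamL + (lamU - lamL) / k)
    (has2 : ∀ i ∈ S, (lamU - lamL) / (2 * Ps i) < as i ∧ as i ≤ (lamU - lamL) / (ks * Ps i))
    (hbb : ∀ i ∈ B, lamL + (k - 1) * (lamU - lamL) / k < bb i ∧ bb i ≤ lamU)
    (hab2 : ∀ i ∈ B, (lamU - lamL) / (-2 * Pb i) < ab i ∧ ab i ≤ (lamU - lamL) / (-kb * Pb i)) :
    (∀ i ∈ B, Pb i < (lam - bb i) / (2 * ab i) ∧ (lam - bb i) / (2 * ab i) < 0) ∧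
    (∀ i ∈ S, 0 < (lam - bs i) / (2 * as i) ∧ (lam - bs i) / (2 * as i) < Ps i) := by
  obtain ⟨hks0, hks2⟩ := hks
  obtain ⟨hkb0, hkb2⟩ := hkb
  have hΔ : (0:ℝ) < lamU - lamL := sub_pos.2 hlamLU
  have hk0 : (0:ℝ) < k := by linarith
  have hk2 : (0:ℝ) < k - 2 := by linarith
  set t : ℝ := (lamU - lamL) / k with ht
  have ht0 : 0 < t := div_pos hΔ hk0
  have htk : t * k = lamU - lamL := div_mul_cancel₀ _ (ne_of_gt hk0)
  have hmd : (k - 1) * (lamU - lamL) / k = (k - 1) * t := by rw [ht, mul_div_assoc]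
  have hX : (0:ℝ) < -∑ i ∈ B, Pb i := by
    rw [neg_pos]; exact Finset.sum_neg hPb hB
  have hY : (0:ℝ) < ∑ i ∈ S, Ps i := Finset.sum_pos hPs hS
  have h1 : 2 * ∑ i ∈ S, Ps i < kb * (k - 2) * (-∑ i ∈ B, Pb i) := by
    have := (div_lt_div_iff₀ (by positivity) hY).1 hratio1
    nlinarith
  have h2 : 2 * (-∑ i ∈ B, Pb i) < ks * (k - 2) * ∑ i ∈ S, Ps i := by
    have := (div_lt_div_iff₀ hY (by norm_num : (0:ℝ) < 2)).1 hratio2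
    nlinarith
  have hD : 0 < ∑ i ∈ B, 1 / ab i + ∑ i ∈ S, 1 / as i := by
    have h3 : 0 < ∑ i ∈ B, 1 / ab i :=
      Finset.sum_pos (fun i hi => one_div_pos.2 (hab i hi)) hB
    have h4 : 0 ≤ ∑ i ∈ S, 1 / as i :=
      Finset.sum_nonneg fun i hi => le_of_lt (one_div_pos.2 (has i hi))
    linarith
  have key : ∀ c : ℝ,
      (∑ i ∈ B, bb i / ab i + ∑ i ∈ S, bs i / as i)
        - c * (∑ i ∈ B, 1 / ab i + ∑ i ∈ S, 1 / as i)
      = (∑ j ∈ B, (bb j - c) / ab j) + ∑ j ∈ S, (bs j - c) / as j := by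
    intro c
    simp only [sub_div, Finset.sum_sub_distrib, mul_add, Finset.mul_sum, mul_one_div]
    ring
  -- sellers: bs i < lam
  have hSlam : ∀ i ∈ S, bs i < lam := by
    intro i hi
    rw [hlam, lt_div_iff₀ hD, ← sub_pos, key (bs i)]
    have hbi : bs i < lamL + t := (hbs i hi).2
    have hBlt : ∑ j ∈ B, ((k - 2) * kb * (-Pb j) / k) < ∑ j ∈ B, (bb j - bs i) / ab j := by
      refine Finset.sum_lt_sum_of_nonempty hB ?_
      intro j hj
      rw [div_lt_div_iff₀ hk0 (hab j hj)]
      have hP : 0 < -Pb j := by linarith [hPb j hj]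
      have hpos : 0 < -kb * Pb j := by nlinarith
      have h3 : ab j * (-kb * Pb j) ≤ lamU - lamL := by
        have h5 := (hab2 j hj).2
        calc ab j * (-kb * Pb j) ≤ (lamU - lamL) / (-kb * Pb j) * (-kb * Pb j) := by
              exact mul_le_mul_of_nonneg_right h5 (le_of_lt hpos)
          _ = lamU - lamL := div_mul_cancel₀ _ (ne_of_gt hpos)
      have h4 : lamL + (k - 1) * t < bb j := by
        have := (hbb j hj).1; rw [hmd] at this; exact this
      have h6 : (k - 2) * t < bb j - bs i := by linarith
      nlinarith [mul_lt_mul_of_pos_right h6 hk0, mul_le_mul_of_nonneg_left h3 (le_of_lt hk2)]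
    have hSlt : ∑ j ∈ S, (-(2 * Ps j) / k) < ∑ j ∈ S, (bs j - bs i) / as j := by
      refine Finset.sum_lt_sum_of_nonempty hS ?_
      intro j hj
      rw [div_lt_div_iff₀ hk0 (has j hj)]
      have hpos : 0 < 2 * Ps j := by linarith [hPs j hj]
      have h3 : lamU - lamL < as j * (2 * Ps j) := by
        have := (has2 j hj).1
        have := (div_lt_iff₀ hpos).1 this
        nlinarith
      have h6 : -t < bs j - bs i := by linarith [(hbs j hj).1]
      nlinarith [mul_lt_mul_of_pos_right h6 hk0]
    have e1 : ∑ j ∈ B, ((k - 2) * kb * (-Pb j) / k)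
        = (k - 2) * kb * (-∑ j ∈ B, Pb j) / k := by
      rw [← Finset.sum_div, ← Finset.mul_sum]
      congr 2
      exact Finset.sum_neg_distrib _
    have e2 : ∑ j ∈ S, (-(2 * Ps j) / k) = -(2 * ∑ j ∈ S, Ps j) / k := by
      rw [← Finset.sum_div, Finset.sum_neg_distrib, ← Finset.mul_sum]
    rw [e1] at hBlt; rw [e2] at hSlt
    have hnum : 0 < ((k - 2) * kb * (-∑ j ∈ B, Pb j) + -(2 * ∑ j ∈ S, Ps j)) / k :=
      div_pos (by linarith) hk0
    have heq : (k - 2) * kb * (-∑ j ∈ B, Pb j) / k + -(2 * ∑ j ∈ S, Ps j) / k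
        = ((k - 2) * kb * (-∑ j ∈ B, Pb j) + -(2 * ∑ j ∈ S, Ps j)) / k := by ring
    linarith
  -- buyers: lam < bb i
  have hBlam : ∀ i ∈ B, lam < bb i := by
    intro i hi
    rw [hlam, div_lt_iff₀ hD]
    have hkey := key (bb i)
    have hbi : lamL + (k - 1) * t < bb i := by
      have := (hbb i hi).1; rw [hmd] at this; exact this
    have hBlt : ∑ j ∈ B, (bb j - bb i) / ab j < ∑ j ∈ B, (2 * (-Pb j) / k) := by
      refine Finset.sum_lt_sum_of_nonempty hB ?_
      intro j hj
      rw [div_lt_div_iff₀ (hab j hj) hk0]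
      have hP : 0 < -Pb j := by linarith [hPb j hj]
      have hpos : 0 < -2 * Pb j := by linarith
      have h3 : lamU - lamL < ab j * (-2 * Pb j) := by
        have := (hab2 j hj).1
        have := (div_lt_iff₀ hpos).1 this
        nlinarith
      have h6 : bb j - bb i < t := by
        have := (hbb j hj).2; nlinarith [htk]
      nlinarith [mul_lt_mul_of_pos_right h6 hk0]
    have hSlt : ∑ j ∈ S, (bs j - bb i) / as j < ∑ j ∈ S, (-((k - 2) * ks * Ps j) / k) := by
      refine Finset.sum_lt_sum_of_nonempty hS ?_
      intro j hj
      rw [div_lt_div_iff₀ (has j hj) hk0]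
      have hPj := hPs j hj
      have hpos : 0 < ks * Ps j := by positivity
      have h3 : as j * (ks * Ps j) ≤ lamU - lamL := by
        have h5 := (has2 j hj).2
        calc as j * (ks * Ps j) ≤ (lamU - lamL) / (ks * Ps j) * (ks * Ps j) := by
              exact mul_le_mul_of_nonneg_right h5 (le_of_lt hpos)
          _ = lamU - lamL := div_mul_cancel₀ _ (ne_of_gt hpos)
      have hbj : bs j < lamL + t := (hbs j hj).2
      have h6 : bs j - bb i < -((k - 2) * t) := by linarith
      nlinarith [mul_lt_mul_of_pos_right h6 hk0, mul_le_mul_of_nonneg_left h3 (le_of_lt hk2)]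
    have e1 : ∑ j ∈ B, (2 * (-Pb j) / k) = 2 * (-∑ j ∈ B, Pb j) / k := by
      rw [← Finset.sum_div, ← Finset.mul_sum]
      congr 2
      exact Finset.sum_neg_distrib _
    have e2 : ∑ j ∈ S, (-((k - 2) * ks * Ps j) / k) = -((k - 2) * ks * ∑ j ∈ S, Ps j) / k := by
      rw [← Finset.sum_div, Finset.sum_neg_distrib, ← Finset.mul_sum]
    rw [e1] at hBlt; rw [e2] at hSlt
    have hnum : 0 < ((k - 2) * ks * ∑ j ∈ S, Ps j - 2 * (-∑ j ∈ B, Pb j)) / k :=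
      div_pos (by linarith) hk0
    have heq : (2 * -∑ j ∈ B, Pb j) / k + -((k - 2) * ks * ∑ j ∈ S, Ps j) / k
        = -(((k - 2) * ks * ∑ j ∈ S, Ps j - 2 * (-∑ j ∈ B, Pb j)) / k) := by ring
    linarith [hkey, hBlt, hSlt]
  -- lamL ≤ lam
  have hlamL : lamL ≤ lam := by
    rw [hlam, le_div_iff₀ hD, ← sub_nonneg, key lamL]
    have hb : 0 ≤ ∑ j ∈ B, (bb j - lamL) / ab j := by
      refine Finset.sum_nonneg fun j hj => div_nonneg ?_ (le_of_lt (hab j hj))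
      have := (hbb j hj).1
      have h7 : 0 ≤ (k - 1) * (lamU - lamL) / k :=
        div_nonneg (mul_nonneg (by linarith) (le_of_lt hΔ)) (le_of_lt hk0)
      linarith
    have hs' : 0 ≤ ∑ j ∈ S, (bs j - lamL) / as j := by
      refine Finset.sum_nonneg fun j hj => div_nonneg ?_ (le_of_lt (has j hj))
      linarith [(hbs j hj).1]
    linarith
  -- lam ≤ lamU
  have hlamU : lam ≤ lamU := by
    rw [hlam, div_le_iff₀ hD, ← sub_nonneg]
    have hkey := key lamU
    have htΔ : t ≤ lamU - lamL := by nlinarith [mul_pos ht0 (show (0:ℝ) < k - 1 by linarith)]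
    have hb : ∑ j ∈ B, (bb j - lamU) / ab j ≤ 0 := by
      refine Finset.sum_nonpos fun j hj => div_nonpos_of_nonpos_of_nonneg ?_ (le_of_lt (hab j hj))
      linarith [(hbb j hj).2]
    have hs' : ∑ j ∈ S, (bs j - lamU) / as j ≤ 0 := by
      refine Finset.sum_nonpos fun j hj => div_nonpos_of_nonpos_of_nonneg ?_ (le_of_lt (has j hj))
      have := (hbs j hj).2
      linarith
    linarith [hkey]
  constructor
  · intro i hi
    have habi := hab i hi
    have h2ab : 0 < 2 * ab i := by linarith
    constructor
    · rw [lt_div_iff₀ h2ab]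
      have hpos : 0 < -2 * Pb i := by linarith [hPb i hi]
      have h3 : lamU - lamL < ab i * (-2 * Pb i) := by
        have := (hab2 i hi).1
        have := (div_lt_iff₀ hpos).1 this
        nlinarith
      have := (hbb i hi).2
      nlinarith
    · exact div_neg_of_neg_of_pos (by linarith [hBlam i hi]) h2ab
  · intro i hi
    have hasi := has i hi
    have h2as : 0 < 2 * as i := by linarith
    constructor
    · exact div_pos (by linarith [hSlam i hi]) h2as
    · rw [div_lt_iff₀ h2as]
      have hpos : 0 < 2 * Ps i := by linarith [hPs i hi]
      have h3 : lamU - lamL < as i * (2 * Ps i) := by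
        have := (has2 i hi).1
        have := (div_lt_iff₀ hpos).1 this
        nlinarith
      have := (hbs i hi).1
      nlinarith
end

section
/- Let B and S be disjoint nonempty finite sets, λ̲ < λ̄, k > 2, 0 < k_s < 2, 0 < k_b < 2, and suppose 2/(k_b(k−2)) < (−Σ_{i∈B} P̲_{i,b})/(Σ_{i∈S} P̄_{i,s}) < k_s(k−2)/2, where P̲_{i,b} < 0 for i ∈ B and P̄_{i,s} > 0 for i ∈ S. If (λ̄−λ̲)/(2 P̄_{i,s}) < a_{i,s} ≤ (λ̄−λ̲)/(k_s P̄_{i,s}) for every i ∈ S and (λ̄−λ̲)/(−2 P̲_{i,b}) < a_{i,b} ≤ (λ̄−λ̲)/(−k_b P̲_{i,b}) for every i ∈ B, then 1/(k−2) < (Σ_{i∈B} 1/a_{i,b})/(Σ_{i∈S} 1/a_{i,s}) < k−2. -/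
/-- Under the global ratio condition on total trading bounds and the decentralized
selection rules for the quadratic parameters, the ratio of the sums of reciprocal
quadratic parameters lies strictly between `1/(k−2)` and `k−2`. -/
theorem a_ratio_bounds {ι : Type*} (B S : Finset ι) (hBS : Disjoint B S)
    (hB : B.Nonempty) (hS : S.Nonempty)
    (ab Pb as Ps : ι → ℝ)
    (hPb : ∀ i ∈ B, Pb i < 0) (hPs : ∀ i ∈ S, 0 < Ps i)
    (lamL lamU : ℝ) (hlamLU : lamL < lamU)
    (k ks kb : ℝ) (hk : k > 2) (hks : 0 < ks ∧ ks < 2) (hkb : 0 < kb ∧ kb < 2)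
    (hratio1 : 2 / (kb * (k - 2)) < (-∑ i ∈ B, Pb i) / (∑ i ∈ S, Ps i))
    (hratio2 : (-∑ i ∈ B, Pb i) / (∑ i ∈ S, Ps i) < ks * (k - 2) / 2)
    (has : ∀ i ∈ S, (lamU - lamL) / (2 * Ps i) < as i ∧ as i ≤ (lamU - lamL) / (ks * Ps i))
    (hab : ∀ i ∈ B, (lamU - lamL) / (-2 * Pb i) < ab i ∧ ab i ≤ (lamU - lamL) / (-kb * Pb i)) :
    1 / (k - 2) < (∑ i ∈ B, 1 / ab i) / (∑ i ∈ S, 1 / as i) ∧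
    (∑ i ∈ B, 1 / ab i) / (∑ i ∈ S, 1 / as i) < k - 2 := by
  obtain ⟨hks0, hks2⟩ := hks
  obtain ⟨hkb0, hkb2⟩ := hkb
  set D := lamU - lamL with hDdef
  have hD : 0 < D := by simp [hDdef]; linarith
  have hk2 : 0 < k - 2 := by linarith
  -- termwise bounds for sellers
  have hSlo : ∀ i ∈ S, ks * Ps i / D ≤ 1 / as i := by
    intro i hi
    have hP := hPs i hi
    have h1 := (has i hi).1
    have h2 := (has i hi).2
    have hpos : 0 < as i := lt_trans (by positivity) h1
    rw [div_le_div_iff₀ hD hpos]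
    rw [le_div_iff₀ (by positivity)] at h2
    nlinarith
  have hShi : ∀ i ∈ S, 1 / as i < 2 * Ps i / D := by
    intro i hi
    have hP := hPs i hi
    have h1 := (has i hi).1
    have hpos : 0 < as i := lt_trans (by positivity) h1
    rw [div_lt_div_iff₀ hpos hD]
    rw [div_lt_iff₀ (by positivity)] at h1
    nlinarith
  -- termwise bounds for buyers
  have hBlo : ∀ i ∈ B, kb * (-Pb i) / D ≤ 1 / ab i := by
    intro i hi
    have hP := hPb i hi
    have h1 := (hab i hi).1
    have h2 := (hab i hi).2
    have hnP : 0 < -Pb i := by linarith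
    have hpos : 0 < ab i := lt_trans (div_pos hD (by linarith)) h1
    rw [div_le_div_iff₀ hD hpos]
    have : (lamU - lamL) / (-kb * Pb i) = D / (kb * (-Pb i)) := by rw [hDdef]; ring_nf
    rw [this, le_div_iff₀ (by positivity)] at h2
    nlinarith
  have hBhi : ∀ i ∈ B, 1 / ab i < 2 * (-Pb i) / D := by
    intro i hi
    have hP := hPb i hi
    have h1 := (hab i hi).1
    have hnP : 0 < -Pb i := by linarith
    have hpos : 0 < ab i := lt_trans (div_pos hD (by linarith)) h1
    rw [div_lt_div_iff₀ hpos hD]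
    have : (lamU - lamL) / (-2 * Pb i) = D / (2 * (-Pb i)) := by rw [hDdef]; ring_nf
    rw [this, div_lt_iff₀ (by positivity)] at h1
    nlinarith
  -- sums
  set P := ∑ i ∈ S, Ps i with hPdef
  set Q := -∑ i ∈ B, Pb i with hQdef
  have hPpos : 0 < P := Finset.sum_pos hPs hS
  have hQpos : 0 < Q := by
    have : ∑ i ∈ B, Pb i < 0 := Finset.sum_neg hPb hB
    simp [hQdef]; linarith
  have hSSlo : ks * P / D ≤ ∑ i ∈ S, 1 / as i := by
    calc ks * P / D = ∑ i ∈ S, ks * Ps i / D := by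
          rw [← Finset.sum_div, ← Finset.mul_sum]
      _ ≤ _ := Finset.sum_le_sum hSlo
  have hSShi : ∑ i ∈ S, 1 / as i < 2 * P / D := by
    calc (∑ i ∈ S, 1 / as i) < ∑ i ∈ S, 2 * Ps i / D :=
          Finset.sum_lt_sum_of_nonempty hS hShi
      _ = 2 * P / D := by rw [← Finset.sum_div, ← Finset.mul_sum]
  have hSBlo : kb * Q / D ≤ ∑ i ∈ B, 1 / ab i := by
    calc kb * Q / D = ∑ i ∈ B, kb * (-Pb i) / D := by
          rw [← Finset.sum_div, ← Finset.mul_sum, hQdef, ← Finset.sum_neg_distrib]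
      _ ≤ _ := Finset.sum_le_sum hBlo
  have hSBhi : ∑ i ∈ B, 1 / ab i < 2 * Q / D := by
    calc (∑ i ∈ B, 1 / ab i) < ∑ i ∈ B, 2 * (-Pb i) / D :=
          Finset.sum_lt_sum_of_nonempty hB hBhi
      _ = 2 * Q / D := by rw [← Finset.sum_div, ← Finset.mul_sum, hQdef, ← Finset.sum_neg_distrib]
  set SB := ∑ i ∈ B, 1 / ab i
  set SS := ∑ i ∈ S, 1 / as i
  have hSSpos : 0 < SS := lt_of_lt_of_le (by positivity) hSSlo
  have hSBpos : 0 < SB := lt_of_lt_of_le (by positivity) hSBlo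
  rw [div_lt_iff₀ hPpos] at hratio2
  rw [div_lt_div_iff₀ (by positivity) hPpos] at hratio1
  constructor
  · rw [div_lt_div_iff₀ hk2 hSSpos]
    -- 1 * SS < SB * (k-2):  SS < 2P/D, (k-2)*SB ≥ (k-2)*kb*Q/D, 2P < kb(k-2)Q
    have key : 2 * P / D ≤ (k - 2) * (kb * Q / D) := by
      rw [← mul_div_assoc, div_le_div_iff₀ hD hD]
      nlinarith
    nlinarith
  · rw [div_lt_iff₀ hSSpos]
    have key : 2 * Q / D ≤ (k - 2) * (ks * P / D) := by
      rw [← mul_div_assoc, div_le_div_iff₀ hD hD]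
      nlinarith
    nlinarith
end

section
/- (Corollary 1.) Let B and S be disjoint nonempty finite index sets of buying and selling prosumers, with parameters a_{i,b} > 0, b_{i,b} ∈ ℝ, P̲_{i,b} < 0 for buyers and a_{i,s} > 0, b_{i,s} ∈ ℝ, P̄_{i,s} > 0 for sellers, and let λ̲ < λ̄. Let k > 4 satisfy 2/(k−2) < (−Σ_{i∈B} P̲_{i,b})/(Σ_{i∈S} P̄_{i,s}) < (k−2)/2. Suppose that for every seller i ∈ S: λ̲ ≤ b_{i,s} < λ̲ + (λ̄−λ̲)/k and (λ̄−λ̲)/(2 P̄_{i,s}) < a_{i,s} ≤ (λ̄−λ̲)/P̄_{i,s}; and for every buyer i ∈ B: λ̲ + (k−1)(λ̄−λ̲)/k < b_{i,b} ≤ λ̄ and (λ̄−λ̲)/(−2 P̲_{i,b}) < a_{i,b} ≤ (λ̄−λ̲)/(−P̲_{i,b}). Then strict feasibility holds: P̲_{i,b} < P*_{i,b} < 0 for every i ∈ B and 0 < P*_{i,s} < P̄_{i,s} for every i ∈ S. -/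
set_option maxHeartbeats 1000000 in
/-- Corollary 1: the special case `k_s = k_b = 1`, `k > 4` of the decentralized
parameter selection rules guarantees strict feasibility of all P2P transactions. -/
theorem coro1_strict_feasibility {ι : Type*} (B S : Finset ι) (hBS : Disjoint B S)
    (hB : B.Nonempty) (hS : S.Nonempty)
    (ab bb Pb as bs Ps : ι → ℝ)
    (hab : ∀ i ∈ B, 0 < ab i) (hPb : ∀ i ∈ B, Pb i < 0)
    (has : ∀ i ∈ S, 0 < as i) (hPs : ∀ i ∈ S, 0 < Ps i)
    (lamL lamU : ℝ) (hlamLU : lamL < lamU)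
    (lam : ℝ)
    (hlam : lam = (∑ i ∈ B, bb i / ab i + ∑ i ∈ S, bs i / as i) /
                  (∑ i ∈ B, 1 / ab i + ∑ i ∈ S, 1 / as i))
    (k : ℝ) (hk : k > 4)
    (hratio1 : 2 / (k - 2) < (-∑ i ∈ B, Pb i) / (∑ i ∈ S, Ps i))
    (hratio2 : (-∑ i ∈ B, Pb i) / (∑ i ∈ S, Ps i) < (k - 2) / 2)
    (hbs : ∀ i ∈ S, lamL ≤ bs i ∧ bs i < lamL + (lamU - lamL) / k)
    (has2 : ∀ i ∈ S, (lamU - lamL) / (2 * Ps i) < as i ∧ as i ≤ (lamU - lamL) / Ps i)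
    (hbb : ∀ i ∈ B, lamL + (k - 1) * (lamU - lamL) / k < bb i ∧ bb i ≤ lamU)
    (hab2 : ∀ i ∈ B, (lamU - lamL) / (-2 * Pb i) < ab i ∧ ab i ≤ (lamU - lamL) / (-Pb i)) :
    (∀ i ∈ B, Pb i < (lam - bb i) / (2 * ab i) ∧ (lam - bb i) / (2 * ab i) < 0) ∧
    (∀ i ∈ S, 0 < (lam - bs i) / (2 * as i) ∧ (lam - bs i) / (2 * as i) < Ps i) := by
  set Δ := lamU - lamL with hΔ
  have hΔ0 : 0 < Δ := by simp [hΔ]; linarith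
  have hk0 : (0:ℝ) < k := by linarith
  have hk2 : (0:ℝ) < k - 2 := by linarith
  set Wb := ∑ i ∈ B, 1 / ab i with hWb
  set Ws := ∑ i ∈ S, 1 / as i with hWs
  set SPs := ∑ i ∈ S, Ps i with hSPs
  set SPb := ∑ i ∈ B, Pb i with hSPb
  have hSPs0 : 0 < SPs := Finset.sum_pos hPs hS
  have hSPb0 : SPb < 0 := Finset.sum_neg hPb hB
  -- termwise facts
  have hWb0 : 0 < Wb := Finset.sum_pos (fun i hi => by have := hab i hi; positivity) hB
  have hWs0 : 0 < Ws := Finset.sum_pos (fun i hi => by have := has i hi; positivity) hS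
  -- Ws < 2*SPs/Δ
  have hWsU : Ws < 2 * SPs / Δ := by
    have : Ws < ∑ i ∈ S, 2 * Ps i / Δ := by
      apply Finset.sum_lt_sum_of_nonempty hS
      intro i hi
      have h1 := (has2 i hi).1
      have hp := hPs i hi
      have ha := has i hi
      rw [div_lt_div_iff₀ (by positivity) hΔ0]
      rw [div_lt_iff₀ (by positivity)] at h1
      nlinarith
    have e1 : (∑ i ∈ S, 2 * Ps i / Δ) = 2 * SPs / Δ := by
      rw [hSPs, Finset.mul_sum, Finset.sum_div]
    linarith [this, e1.le, e1.ge]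
  -- Ws ≥ SPs/Δ
  have hWsL : SPs / Δ ≤ Ws := by
    have : (∑ i ∈ S, Ps i / Δ) ≤ Ws := by
      apply Finset.sum_le_sum
      intro i hi
      have h2 := (has2 i hi).2
      have hp := hPs i hi
      have ha := has i hi
      rw [div_le_div_iff₀ hΔ0 ha]
      rw [le_div_iff₀ hp] at h2
      nlinarith
    have e1 : (∑ i ∈ S, Ps i / Δ) = SPs / Δ := by rw [hSPs, Finset.sum_div]
    linarith [this, e1.le, e1.ge]
  -- Wb < 2*(-SPb)/Δ
  have hWbU : Wb < 2 * (-SPb) / Δ := by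
    have : Wb < ∑ i ∈ B, 2 * (-Pb i) / Δ := by
      apply Finset.sum_lt_sum_of_nonempty hB
      intro i hi
      have h1 := (hab2 i hi).1
      have hp := hPb i hi
      have ha := hab i hi
      rw [div_lt_div_iff₀ (by positivity) hΔ0]
      rw [div_lt_iff₀ (by nlinarith)] at h1
      nlinarith
    have e1 : (∑ i ∈ B, 2 * (-Pb i) / Δ) = 2 * (-SPb) / Δ := by
      rw [hSPb, ← Finset.sum_neg_distrib, Finset.mul_sum, Finset.sum_div]
    linarith [this, e1.le, e1.ge]
  -- Wb ≥ (-SPb)/Δ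
  have hWbL : (-SPb) / Δ ≤ Wb := by
    have : (∑ i ∈ B, (-Pb i) / Δ) ≤ Wb := by
      apply Finset.sum_le_sum
      intro i hi
      have h2 := (hab2 i hi).2
      have hp := hPb i hi
      have ha := hab i hi
      rw [div_le_div_iff₀ hΔ0 ha]
      rw [le_div_iff₀ (by linarith)] at h2
      nlinarith
    have e1 : (∑ i ∈ B, (-Pb i) / Δ) = (-SPb) / Δ := by
      rw [hSPb, ← Finset.sum_neg_distrib, Finset.sum_div]
    linarith [this, e1.le, e1.ge]
  -- ratio conditions translated
  have hr1 : 2 * SPs < (k - 2) * (-SPb) := by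
    rw [div_lt_div_iff₀ hk2 hSPs0] at hratio1; nlinarith
  have hr2 : 2 * (-SPb) < (k - 2) * SPs := by
    rw [div_lt_div_iff₀ hSPs0 (by norm_num : (0:ℝ) < 2)] at hratio2; nlinarith
  -- weight comparisons
  have hWcmp1 : Ws < (k - 2) * Wb := by
    have h1 : (k-2) * ((-SPb)/Δ) ≤ (k-2) * Wb := by
      apply mul_le_mul_of_nonneg_left hWbL (le_of_lt hk2)
    have h2 : 2 * SPs / Δ ≤ (k-2) * ((-SPb)/Δ) := by
      rw [← mul_div_assoc]
      exact div_le_div_of_nonneg_right hr1.le hΔ0.le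
    linarith
  have hWcmp2 : Wb < (k - 2) * Ws := by
    have h1 : (k-2) * (SPs/Δ) ≤ (k-2) * Ws := by
      apply mul_le_mul_of_nonneg_left hWsL (le_of_lt hk2)
    have h2 : 2 * (-SPb) / Δ ≤ (k-2) * (SPs/Δ) := by
      rw [← mul_div_assoc]
      exact div_le_div_of_nonneg_right hr2.le hΔ0.le
    linarith
  -- numerator bounds
  have hNbL : (lamL + (k-1) * Δ / k) * Wb ≤ ∑ i ∈ B, bb i / ab i := by
    rw [hWb, Finset.mul_sum]
    apply Finset.sum_le_sum
    intro i hi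
    have h := (hbb i hi).1
    have ha := hab i hi
    rw [mul_one_div, div_le_div_iff₀ ha ha]
    exact mul_le_mul_of_nonneg_right h.le ha.le
  have hNbU : (∑ i ∈ B, bb i / ab i) ≤ lamU * Wb := by
    rw [hWb, Finset.mul_sum]
    apply Finset.sum_le_sum
    intro i hi
    have h := (hbb i hi).2
    have ha := hab i hi
    rw [mul_one_div, div_le_div_iff₀ ha ha]
    exact mul_le_mul_of_nonneg_right h ha.le
  have hNsL : lamL * Ws ≤ ∑ i ∈ S, bs i / as i := by
    rw [hWs, Finset.mul_sum]
    apply Finset.sum_le_sum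
    intro i hi
    have h := (hbs i hi).1
    have ha := has i hi
    rw [mul_one_div, div_le_div_iff₀ ha ha]
    exact mul_le_mul_of_nonneg_right h ha.le
  have hNsU : (∑ i ∈ S, bs i / as i) ≤ (lamL + Δ / k) * Ws := by
    rw [hWs, Finset.mul_sum]
    apply Finset.sum_le_sum
    intro i hi
    have h := (hbs i hi).2
    have ha := has i hi
    rw [mul_one_div, div_le_div_iff₀ ha ha]
    exact mul_le_mul_of_nonneg_right h.le ha.le
  have hW0 : 0 < Wb + Ws := by linarith
  clear_value Δ Wb Ws SPs SPb
  set Nb := ∑ i ∈ B, bb i / ab i with hNbdef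
  set Ns := ∑ i ∈ S, bs i / as i with hNsdef
  clear_value Nb Ns
  obtain ⟨u, hu⟩ : ∃ u, u = Δ / k := ⟨_, rfl⟩
  have hu0 : 0 < u := by rw [hu]; positivity
  have hΔu : Δ = k * u := by rw [hu]; field_simp
  have hUu : lamU = lamL + k * u := by rw [← hΔu, hΔ]; ring
  have e_k1 : (k - 1) * Δ / k = (k - 1) * u := by
    rw [hΔu]; field_simp
  rw [e_k1] at hNbL
  rw [← hu] at hNsU
  -- lambda bounds
  have hlamL' : lamL + u ≤ lam := by
    rw [hlam, le_div_iff₀ hW0]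
    have h := mul_le_mul_of_nonneg_left hWcmp1.le hu0.le
    linarith [h, hNbL, hNsL]
  have hlamU' : lam ≤ lamL + (k - 1) * u := by
    rw [hlam, div_le_iff₀ hW0]
    rw [hUu] at hNbU
    have h := mul_le_mul_of_nonneg_left hWcmp2.le hu0.le
    linarith [h, hNbU, hNsU]
  have hlamub : lam ≤ lamU := by
    rw [hUu]; nlinarith [hlamU', hu0]
  constructor
  · intro i hi
    have ha := hab i hi
    have hp := hPb i hi
    have hbbU := (hbb i hi).2
    have hbbL := (hbb i hi).1
    rw [e_k1] at hbbL
    have h1 := (hab2 i hi).1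
    rw [div_lt_iff₀ (by nlinarith : (0:ℝ) < -2 * Pb i)] at h1
    rw [hΔu] at h1
    constructor
    · rw [lt_div_iff₀ (by positivity)]
      have hlamgt : lamL < lam := by nlinarith
      rw [hUu] at hbbU
      nlinarith
    · apply div_neg_of_neg_of_pos _ (by positivity)
      have : lam < bb i := lt_of_le_of_lt hlamU' hbbL
      linarith
  · intro i hi
    have ha := has i hi
    have hp := hPs i hi
    have hbsL := (hbs i hi).1
    have hbsU := (hbs i hi).2
    rw [← hu] at hbsU
    have h1 := (has2 i hi).1
    rw [div_lt_iff₀ (by positivity : (0:ℝ) < 2 * Ps i)] at h1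
    rw [hΔu] at h1
    constructor
    · apply div_pos _ (by positivity)
      have : bs i < lam := lt_of_lt_of_le hbsU hlamL'
      linarith
    · rw [div_lt_iff₀ (by positivity)]
      rw [hUu] at hlamub
      nlinarith
end

section
/- (Corollary 2, single buyer.) Let S be a nonempty finite index set of selling prosumers with parameters a_{i,s} > 0, b_{i,s} ∈ ℝ, P̄_{i,s} > 0, and let there be a single buying prosumer with parameters a_b > 0, b_b ∈ ℝ and power lower bound P̲_b < 0. Let λ̲ < λ̄ and k > 1. Suppose: λ̲ ≤ b_{i,s} < λ̲ + (λ̄−λ̲)/k < b_b ≤ λ̄ for every i ∈ S; a_{i,s} > (λ̄−λ̲)/(2 P̄_{i,s}) for every i ∈ S; and (λ̄−λ̲)/(−2 P̲_b) < a_b ≤ (k b_b − (k−1)λ̲ − λ̄)/(2 Σ_{i∈S} P̄_{i,s}). Then strict feasibility holds: P̲_b < P*_b < 0 for the buyer and 0 < P*_{i,s} < P̄_{i,s} for every seller i ∈ S, where λ* = (b_b/a_b + Σ_{i∈S} b_{i,s}/a_{i,s})/(1/a_b + Σ_{i∈S} 1/a_{i,s}), P*_b = (λ* − b_b)/(2 a_b),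 and P*_{i,s} = (λ* − b_{i,s})/(2 a_{i,s}). -/
/-- Corollary 2 (single buyer): parameter selection rules that guarantee strict
feasibility when there is one buying prosumer and finitely many selling prosumers. -/
theorem coro2_single_buyer {ι : Type*} (S : Finset ι) (hS : S.Nonempty)
    (as bs Ps : ι → ℝ)
    (has : ∀ i ∈ S, 0 < as i) (hPs : ∀ i ∈ S, 0 < Ps i)
    (a_b b_b P_b : ℝ) (hab : 0 < a_b) (hPb : P_b < 0)
    (lamL lamU k : ℝ) (hlamLU : lamL < lamU) (hk : k > 1)
    (lam : ℝ)
    (hlam : lam = (b_b / a_b + ∑ i ∈ S, bs i / as i) / (1 / a_b + ∑ i ∈ S, 1 / as i))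
    (hbs : ∀ i ∈ S, lamL ≤ bs i ∧ bs i < lamL + (lamU - lamL) / k)
    (hbb : lamL + (lamU - lamL) / k < b_b ∧ b_b ≤ lamU)
    (has2 : ∀ i ∈ S, as i > (lamU - lamL) / (2 * Ps i))
    (hab2 : (lamU - lamL) / (-2 * P_b) < a_b ∧
            a_b ≤ (k * b_b - (k - 1) * lamL - lamU) / (2 * ∑ i ∈ S, Ps i)) :
    (P_b < (lam - b_b) / (2 * a_b) ∧ (lam - b_b) / (2 * a_b) < 0) ∧
    (∀ i ∈ S, 0 < (lam - bs i) / (2 * as i) ∧ (lam - bs i) / (2 * as i) < Ps i) := by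
  obtain ⟨hbb1, hbb2⟩ := hbb
  obtain ⟨hab21, hab22⟩ := hab2
  have hk0 : (0:ℝ) < k := by linarith
  have hd : (0:ℝ) < lamU - lamL := by linarith
  have hdk : 0 < (lamU - lamL) / k := div_pos hd hk0
  set m := lamL + (lamU - lamL) / k with hm
  have hmL : lamL < m := by rw [hm]; linarith
  have hmU : m < lamU := by
    have := div_lt_self hd hk
    simp only [hm]; linarith
  have hSum : 0 < ∑ i ∈ S, Ps i := Finset.sum_pos hPs hS
  have hAs : 0 < ∑ i ∈ S, 1 / as i :=
    Finset.sum_pos (fun i hi => by have := has i hi; positivity) hS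
  have hA : 0 < 1 / a_b + ∑ i ∈ S, 1 / as i := by
    have h1 : 0 < 1 / a_b := by positivity
    linarith
  -- each seller bound, cleared of division
  have hasb : ∀ i ∈ S, lamU - lamL < as i * (2 * Ps i) := by
    intro i hi
    have h2 : 0 < 2 * Ps i := by have := hPs i hi; linarith
    exact (div_lt_iff₀ h2).mp (has2 i hi)
  -- lam < b_b
  have hlam_lt : lam < b_b := by
    rw [hlam, div_lt_iff₀ hA]
    have h1 : ∑ i ∈ S, bs i / as i < ∑ i ∈ S, b_b * (1 / as i) := by
      apply Finset.sum_lt_sum_of_nonempty hS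
      intro i hi
      have hai := has i hi
      have hbi : bs i < b_b := lt_trans (hbs i hi).2 hbb1
      rw [mul_one_div]
      exact (div_lt_div_iff_of_pos_right hai).mpr hbi
    have h2 : ∑ i ∈ S, b_b * (1 / as i) = b_b * ∑ i ∈ S, 1 / as i := by
      rw [Finset.mul_sum]
    have h3 : b_b / a_b = b_b * (1 / a_b) := by ring
    nlinarith [h1, h2]
  -- lam ≥ m
  have hlam_ge : m ≤ lam := by
    rw [hlam, le_div_iff₀ hA]
    -- per-seller term bound
    have hterm : ∀ i ∈ S, m * (1 / as i) - bs i / as i ≤ 2 / k * Ps i := by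
      intro i hi
      have hai := has i hi
      have hPi := hPs i hi
      have hb1 := (hbs i hi).1
      have hcl := hasb i hi
      rw [mul_one_div, div_sub_div_same, div_le_iff₀ hai]
      have hmb : k * (m - bs i) ≤ lamU - lamL := by
        have : m - bs i ≤ (lamU - lamL) / k := by
          simp only [hm]; linarith
        calc k * (m - bs i) ≤ k * ((lamU - lamL) / k) := by
              exact mul_le_mul_of_nonneg_left this (le_of_lt hk0)
          _ = lamU - lamL := by field_simp
      have hgoal : k * (m - bs i) ≤ k * (2 / k * Ps i * as i) := by
        have : k * (2 / k * Ps i * as i) = 2 * Ps i * as i := by field_simp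
        rw [this]
        nlinarith
      exact le_of_mul_le_mul_left hgoal hk0
    have hsum_term : ∑ i ∈ S, (m * (1 / as i) - bs i / as i) ≤ ∑ i ∈ S, 2 / k * Ps i :=
      Finset.sum_le_sum hterm
    have hsum_eq1 : ∑ i ∈ S, (m * (1 / as i) - bs i / as i)
        = m * (∑ i ∈ S, 1 / as i) - ∑ i ∈ S, bs i / as i := by
      rw [Finset.sum_sub_distrib, Finset.mul_sum]
    have hsum_eq2 : ∑ i ∈ S, 2 / k * Ps i = 2 / k * ∑ i ∈ S, Ps i := by
      rw [Finset.mul_sum]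
    -- buyer side: (2/k) * ΣPs ≤ (b_b - m)/a_b
    have hbuy : 2 / k * (∑ i ∈ S, Ps i) * a_b ≤ b_b - m := by
      have h2S : 0 < 2 * ∑ i ∈ S, Ps i := by linarith
      have hup : a_b * (2 * ∑ i ∈ S, Ps i) ≤ k * b_b - (k - 1) * lamL - lamU :=
        (le_div_iff₀ h2S).mp hab22
      have hkm : k * b_b - (k - 1) * lamL - lamU = k * (b_b - m) := by
        simp only [hm]; field_simp; ring
      rw [hkm] at hup
      have : k * (2 / k * (∑ i ∈ S, Ps i) * a_b) ≤ k * (b_b - m) := by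
        have he : k * (2 / k * (∑ i ∈ S, Ps i) * a_b) = a_b * (2 * ∑ i ∈ S, Ps i) := by
          field_simp
        rw [he]; exact hup
      exact le_of_mul_le_mul_left this hk0
    have hbuy' : 2 / k * (∑ i ∈ S, Ps i) ≤ (b_b - m) / a_b := by
      rw [le_div_iff₀ hab]; exact hbuy
    have hmb : m * (1 / a_b) = m / a_b := by ring
    have hdiff : (b_b - m) / a_b = b_b / a_b - m / a_b := by ring
    nlinarith [hsum_term, hsum_eq1, hsum_eq2, hbuy']
  constructor
  · constructor
    · rw [lt_div_iff₀ (by linarith : (0:ℝ) < 2 * a_b)]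
      have hnP : 0 < -2 * P_b := by linarith
      have h1 : lamU - lamL < a_b * (-2 * P_b) := (div_lt_iff₀ hnP).mp hab21
      nlinarith
    · apply div_neg_of_neg_of_pos
      · linarith
      · linarith
  · intro i hi
    have hai := has i hi
    have hPi := hPs i hi
    obtain ⟨hb1, hb2⟩ := hbs i hi
    constructor
    · apply div_pos
      · have : bs i < m := hb2
        linarith
      · linarith
    · rw [div_lt_iff₀ (by linarith : (0:ℝ) < 2 * as i)]
      have hcl := hasb i hi
      nlinarith
end

section
/- (Corollary 3, single seller.) Let B be a nonempty finite index set of buying prosumers with parameters a_{i,b} > 0, b_{i,b} ∈ ℝ, P̲_{i,b} < 0, and let there be a single selling prosumer with parameters a_s > 0, b_s ∈ ℝ and power upper bound P̄_s > 0. Let λ̲ < λ̄ and k > 1. Suppose: λ̲ ≤ b_s < λ̲ + (λ̄−λ̲)/k < b_{i,b} ≤ λ̄ for every i ∈ B; (λ̄−λ̲)/(2 P̄_s) < a_s ≤ ((k−1)λ̲ + λ̄ − k b_s)/(−2(k−1) Σ_{i∈B} P̲_{i,b}); and a_{i,b} > (λ̄−λ̲)/(−2 P̲_{i,b}) for every i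 ∈ B. Then strict feasibility holds: 0 < P*_s < P̄_s for the seller and P̲_{i,b} < P*_{i,b} < 0 for every buyer i ∈ B, where λ* = (b_s/a_s + Σ_{i∈B} b_{i,b}/a_{i,b})/(1/a_s + Σ_{i∈B} 1/a_{i,b}), P*_s = (λ* − b_s)/(2 a_s), and P*_{i,b} = (λ* − b_{i,b})/(2 a_{i,b}). -/
/-- Corollary 3 (single seller): parameter selection rules that guarantee strict
feasibility when there is one selling prosumer and finitely many buying prosumers. -/
theorem coro3_single_seller {ι : Type*} (B : Finset ι) (hB : B.Nonempty)
    (ab bb Pb : ι → ℝ)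
    (hab : ∀ i ∈ B, 0 < ab i) (hPb : ∀ i ∈ B, Pb i < 0)
    (a_s b_s P_s : ℝ) (has : 0 < a_s) (hPs : 0 < P_s)
    (lamL lamU k : ℝ) (hlamLU : lamL < lamU) (hk : k > 1)
    (lam : ℝ)
    (hlam : lam = (b_s / a_s + ∑ i ∈ B, bb i / ab i) / (1 / a_s + ∑ i ∈ B, 1 / ab i))
    (hbs : lamL ≤ b_s ∧ b_s < lamL + (lamU - lamL) / k)
    (hbb : ∀ i ∈ B, lamL + (lamU - lamL) / k < bb i ∧ bb i ≤ lamU)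
    (has2 : (lamU - lamL) / (2 * P_s) < a_s ∧
            a_s ≤ ((k - 1) * lamL + lamU - k * b_s) / (-2 * (k - 1) * ∑ i ∈ B, Pb i))
    (hab2 : ∀ i ∈ B, ab i > (lamU - lamL) / (-2 * Pb i)) :
    (0 < (lam - b_s) / (2 * a_s) ∧ (lam - b_s) / (2 * a_s) < P_s) ∧
    (∀ i ∈ B, Pb i < (lam - bb i) / (2 * ab i) ∧ (lam - bb i) / (2 * ab i) < 0) := by
  obtain ⟨hbs1, hbs2⟩ := hbs
  obtain ⟨has21, has22⟩ := has2
  set t : ℝ := lamL + (lamU - lamL) / k with ht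
  set c : ℝ := lamU - lamL with hc'
  have hc : 0 < c := by simp [hc']; linarith
  have hk0 : (0:ℝ) < k := by linarith
  have hck : c / k < c := div_lt_self hc hk
  have hck0 : 0 < c / k := div_pos hc hk0
  have htb : b_s < t := hbs2
  have htU : t < lamU := by simp only [ht, hc'] at *; linarith
  have htL : lamL < t := by simp only [ht]; linarith
  -- sum of Pb is negative
  have hSP : ∑ i ∈ B, Pb i < 0 := Finset.sum_neg hPb hB
  have hD : 0 < -2 * (k - 1) * ∑ i ∈ B, Pb i := by nlinarith
  set W : ℝ := 1 / a_s + ∑ i ∈ B, 1 / ab i with hW'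
  have hWsum : (0:ℝ) ≤ ∑ i ∈ B, 1 / ab i :=
    Finset.sum_nonneg fun i hi => le_of_lt (one_div_pos.mpr (hab i hi))
  have hW : 0 < W := by
    have : 0 < 1 / a_s := by positivity
    simp only [hW']; linarith
  set N : ℝ := b_s / a_s + ∑ i ∈ B, bb i / ab i with hN'
  -- key identity helpers
  have hsub : ∀ x : ℝ, N - x * W =
      (b_s - x) / a_s + ∑ i ∈ B, (bb i - x) / ab i := by
    intro x
    have : ∑ i ∈ B, (bb i - x) / ab i
        = ∑ i ∈ B, bb i / ab i - x * ∑ i ∈ B, 1 / ab i := by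
      rw [Finset.mul_sum, ← Finset.sum_sub_distrib]
      refine Finset.sum_congr rfl fun i hi => ?_
      have := (hab i hi).ne'
      field_simp
    simp only [hN', hW', this]
    field_simp
    ring
  -- λ > b_s
  have hlam1 : b_s < lam := by
    have hpos : 0 < N - b_s * W := by
      rw [hsub b_s]
      have h1 : (b_s - b_s) / a_s = 0 := by simp
      have h2 : 0 < ∑ i ∈ B, (bb i - b_s) / ab i := by
        refine Finset.sum_pos (fun i hi => ?_) hB
        have := (hbb i hi).1
        exact div_pos (by linarith) (hab i hi)
      linarith
    rw [hlam, lt_div_iff₀ hW]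
    linarith
  -- λ < t
  have hlam2 : lam < t := by
    have hterm : ∀ i ∈ B, (bb i - t) / ab i < (lamU - t) * (-2 * Pb i) / c := by
      intro i hi
      have habi := hab i hi
      have hPbi := hPb i hi
      have h2 : c < ab i * (-2 * Pb i) := by
        have := hab2 i hi
        rw [gt_iff_lt, div_lt_iff₀ (by linarith : (0:ℝ) < -2 * Pb i)] at this
        linarith [this]
      rw [div_lt_div_iff₀ habi hc]
      have hbbU := (hbb i hi).2
      nlinarith [mul_pos habi (by linarith : (0:ℝ) < -2 * Pb i)]
    have hsum : ∑ i ∈ B, (bb i - t) / ab i <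
        ∑ i ∈ B, (lamU - t) * (-2 * Pb i) / c :=
      Finset.sum_lt_sum_of_nonempty hB hterm
    have hsumval : ∑ i ∈ B, (lamU - t) * (-2 * Pb i) / c
        = (lamU - t) * (-2) / c * ∑ i ∈ B, Pb i := by
      rw [Finset.mul_sum]
      refine Finset.sum_congr rfl fun i hi => ?_
      ring
    have hUt : lamU - t = c * (k - 1) / k := by
      simp only [ht, hc']
      field_simp
      ring
    -- (b_s - t)/a_s ≤ 2(k-1)(∑Pb)/k
    have hseller : (b_s - t) / a_s ≤ 2 * (k - 1) * (∑ i ∈ B, Pb i) / k := by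
      have hkey : a_s * (-2 * (k - 1) * ∑ i ∈ B, Pb i) ≤ k * (t - b_s) := by
        have := has22
        rw [le_div_iff₀ hD] at this
        have hkt : (k - 1) * lamL + lamU - k * b_s = k * (t - b_s) := by
          simp only [ht, hc']; field_simp; ring
        linarith [this, hkt ▸ this]
      rw [div_le_div_iff₀ has hk0]
      nlinarith
    have hneg : N - t * W < 0 := by
      rw [hsub t]
      have h3 : ∑ i ∈ B, (lamU - t) * (-2 * Pb i) / c
          = -2 * (k - 1) * (∑ i ∈ B, Pb i) / k := by
        rw [hsumval, hUt]
        field_simp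
      rw [h3] at hsum
      have : -2 * (k - 1) * (∑ i ∈ B, Pb i) / k
          = -(2 * (k - 1) * (∑ i ∈ B, Pb i) / k) := by ring
      linarith [hsum, hseller]
    rw [hlam, div_lt_iff₀ hW]
    linarith
  have hlamL : lamL < lam := by linarith
  refine ⟨⟨div_pos (by linarith) (by linarith), ?_⟩, fun i hi => ?_⟩
  · -- seller upper bound
    rw [div_lt_iff₀ (by linarith : (0:ℝ) < 2 * a_s)]
    have hcP : c < 2 * P_s * a_s := by
      have := has21
      rw [div_lt_iff₀ (by linarith : (0:ℝ) < 2 * P_s)] at this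
      linarith
    have : lam - b_s < c := by
      have : t - b_s ≤ c / k := by simp only [ht]; linarith
      linarith
    linarith
  · have habi := hab i hi
    have hPbi := hPb i hi
    have hbbi := hbb i hi
    have hlt : lam < bb i := by linarith [hbbi.1]
    constructor
    · rw [lt_div_iff₀ (by linarith : (0:ℝ) < 2 * ab i)]
      have h2 : c < ab i * (-2 * Pb i) := by
        have := hab2 i hi
        rw [gt_iff_lt, div_lt_iff₀ (by linarith : (0:ℝ) < -2 * Pb i)] at this
        linarith
      have hnum : bb i - lam < c := by
        have := hbbi.2
        simp only [hc']
        linarith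
      linarith
    · exact div_neg_of_neg_of_pos (by linarith [hbbi.1]) (by linarith)
end
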